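/- Every total computable function ℕ → ℕ extensional on indices of total computable functions induces a continuous map: if z is an index such that {z}(y) halts for every y with {y} total, and {z}(y) = {z}(y') whenever {y} and {y'} are total and pointwise equal, then for every y with {y} total there is m such that for all y' with {y'} total, if {y'} agrees with {y} on inputs < m then {z}(y') = {z}(y). (KLST/Kreisel–Lacombe–Shoenfield theorem.) -/

import Mathlib

open Nat.Partrec

/-- An index `c` computes a total function. -/
def TotalCode (c : Nat.Partrec.Code) : Prop := ∀ n, (c.eval n).Dom

namespace KLSTAux

open Code Encodable Denumerable

/-! ### Lists of values of a code, computed with step bound -/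

def listN (a : Nat.Partrec.Code) (k s : ℕ) : Option (List ℕ) :=
  Nat.rec (some []) (fun i acc => acc.bind fun l => (Code.evaln k a i).map fun v => l ++ [v]) s

@[simp] lemma listN_zero (a k) : listN a k 0 = some [] := rfl
@[simp] lemma listN_succ (a k s) :
    listN a k (s+1) = (listN a k s).bind fun l => (Code.evaln k a s).map fun v => l ++ [v] := rfl

lemma listN_sound {a k s l} (h : listN a k s = some l) :
    l.length = s ∧ ∀ i < s, l.getD i 0 ∈ Code.eval a i := by
  induction s generalizing l with
  | zero => simp_all
  | succ s ih =>
    simp only [listN_succ, Option.bind_eq_some_iff, Option.map_eq_some_iff] at h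
    obtain ⟨l₀, hl₀, v, hv, rfl⟩ := h
    obtain ⟨hlen, hval⟩ := ih hl₀
    constructor
    · simp [hlen]
    · intro i hi
      rcases Nat.lt_succ_iff_lt_or_eq.1 hi with hi | rfl
      · rw [List.getD_append _ _ _ _ (by omega)]
        exact hval i hi
      · have : (l₀ ++ [v]).getD i 0 = v := by
          rw [List.getD_eq_getElem?_getD, List.getElem?_append_right (by omega)]
          simp [hlen]
        rw [this]
        exact Code.evaln_sound hv

lemma listN_mono {a k k' s l} (hk : k ≤ k') (h : listN a k s = some l) :
    listN a k' s = some l := by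
  induction s generalizing l with
  | zero => simp_all
  | succ s ih =>
    simp only [listN_succ, Option.bind_eq_some_iff, Option.map_eq_some_iff] at h ⊢
    obtain ⟨l₀, hl₀, v, hv, rfl⟩ := h
    exact ⟨l₀, ih hl₀, v, Code.evaln_mono hk hv, rfl⟩

lemma listN_dom {a : Nat.Partrec.Code} (ha : ∀ n, (a.eval n).Dom) (s : ℕ) :
    ∃ k l, listN a k s = some l := by
  induction s with
  | zero => exact ⟨0, [], rfl⟩
  | succ s ih =>
    obtain ⟨k, l, hl⟩ := ih
    obtain ⟨v, hv⟩ := Part.dom_iff_mem.1 (ha s)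
    obtain ⟨k₂, hk₂⟩ := Code.evaln_complete.1 hv
    refine ⟨max k k₂, l ++ [v], ?_⟩
    simp only [listN_succ, Option.bind_eq_some_iff, Option.map_eq_some_iff]
    exact ⟨l, listN_mono (le_max_left _ _) hl, v, Code.evaln_mono (le_max_right _ _) hk₂, rfl⟩

def G (a : Nat.Partrec.Code) (s : ℕ) : Part ℕ :=
  Nat.rfindOpt fun k => (listN a k s).map encode

lemma G_dom {a : Nat.Partrec.Code} (ha : ∀ n, (a.eval n).Dom) (s : ℕ) : (G a s).Dom := by
  obtain ⟨k, l, hl⟩ := listN_dom ha s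
  exact Nat.rfindOpt_dom.2 ⟨k, encode l, by simp [hl]⟩

lemma G_sound {a : Nat.Partrec.Code} {s m : ℕ} (h : m ∈ G a s) :
    (ofNat (List ℕ) m).length = s ∧ ∀ i < s, (ofNat (List ℕ) m).getD i 0 ∈ Code.eval a i := by
  obtain ⟨k, hk⟩ := Nat.rfindOpt_spec h
  simp only [Option.mem_def, Option.map_eq_some_iff] at hk
  obtain ⟨l, hl, rfl⟩ := hk
  simpa using listN_sound hl

lemma listN_prim (a : Nat.Partrec.Code) : Primrec₂ fun k s => listN a k s := by
  have inner : Primrec fun r : ((ℕ × ℕ) × (ℕ × Option (List ℕ))) × List ℕ =>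
      (Code.evaln r.1.1.1 a r.1.2.1).map fun v => r.2 ++ [v] := by
    apply Primrec.option_map
    · exact Code.primrec_evaln.comp
        (((Primrec.fst.comp (Primrec.fst.comp Primrec.fst)).pair (Primrec.const a)).pair
          (Primrec.fst.comp (Primrec.snd.comp Primrec.fst)))
    · exact (Primrec.list_concat.comp (Primrec.snd.comp Primrec.fst) Primrec.snd).to₂
  have this1 : Primrec fun r : (ℕ × ℕ) × (ℕ × Option (List ℕ)) =>
      r.2.2.bind fun l => (Code.evaln r.1.1 a r.2.1).map fun v => l ++ [v] :=
    Primrec.option_bind (Primrec.snd.comp Primrec.snd) inner.to₂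
  have : Primrec₂ fun (p : ℕ × ℕ) (q : ℕ × Option (List ℕ)) =>
      q.2.bind fun l => (Code.evaln p.1 a q.1).map fun v => l ++ [v] := this1.to₂
  have h := Primrec.nat_rec' (f := fun p : ℕ × ℕ => p.2)
    (g := fun _ : ℕ × ℕ => (some [] : Option (List ℕ)))
    (h := fun (p : ℕ × ℕ) (q : ℕ × Option (List ℕ)) =>
      q.2.bind fun l => (Code.evaln p.1 a q.1).map fun v => l ++ [v])
    Primrec.snd (Primrec.const _) this
  exact h.to₂.of_eq fun k s => by
    induction s with
    | zero => rfl
    | succ s ih => simp [listN_succ, ← ih]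

/-! ### The `patch` codes -/

def ψ (y : Nat.Partrec.Code) : ℕ →. ℕ := fun x =>
  bif decide (x.unpair.2 < (ofNat (List ℕ) x.unpair.1).length)
  then Part.some ((ofNat (List ℕ) x.unpair.1).getD x.unpair.2 0)
  else y.eval x.unpair.2

lemma ψ_partrec (y : Nat.Partrec.Code) : Partrec (ψ y) := by
  have hσ : Primrec fun x : ℕ => ofNat (List ℕ) x.unpair.1 :=
    (Primrec.ofNat (List ℕ)).comp (Primrec.fst.comp Primrec.unpair)
  have hn : Primrec fun x : ℕ => x.unpair.2 := Primrec.snd.comp Primrec.unpair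
  have hb : Computable fun x : ℕ =>
      decide (x.unpair.2 < (ofNat (List ℕ) x.unpair.1).length) :=
    (Primrec.nat_lt.decide.comp hn (Primrec.list_length.comp hσ)).to_comp
  have hf : Computable fun x : ℕ => (ofNat (List ℕ) x.unpair.1).getD x.unpair.2 0 :=
    ((Primrec.list_getD 0).comp hσ hn).to_comp
  have hg : Partrec fun x : ℕ => y.eval x.unpair.2 :=
    Code.eval_part.comp (Computable.const y) hn.to_comp
  exact Partrec.cond hb hf.partrec hg

/-- A code such that `(Cy y).curry (encode σ)` computes the patch of `y` by `σ`. -/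
noncomputable def Cy (y : Nat.Partrec.Code) : Nat.Partrec.Code :=
  (Code.exists_code.1 (Partrec.nat_iff.1 (ψ_partrec y))).choose

lemma Cy_eval (y : Nat.Partrec.Code) : Code.eval (Cy y) = ψ y :=
  (Code.exists_code.1 (Partrec.nat_iff.1 (ψ_partrec y))).choose_spec

lemma eval_curry_Cy (y : Nat.Partrec.Code) (m x : ℕ) :
    Code.eval ((Cy y).curry m) x =
      if x < (ofNat (List ℕ) m).length
      then Part.some ((ofNat (List ℕ) m).getD x 0)
      else y.eval x := by
  rw [Code.eval_curry, Cy_eval]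
  simp [ψ, Bool.cond_decide]

lemma total_curry_Cy {y : Nat.Partrec.Code} (hy : ∀ n, (y.eval n).Dom) (m : ℕ) :
    ∀ n, (Code.eval ((Cy y).curry m) n).Dom := by
  intro n
  rw [eval_curry_Cy]
  split
  · trivial
  · exact hy n

lemma evaln_none_of_not_dom {c : Nat.Partrec.Code} {n : ℕ} (h : ¬ (c.eval n).Dom) (k : ℕ) :
    Code.evaln k c n = Option.none := by
  match hk : Code.evaln k c n with
  | Option.none => rfl
  | Option.some v =>
    exact absurd (Part.dom_iff_mem.2 ⟨v, Code.evaln_sound (Option.mem_def.2 hk)⟩) h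

/-! ### First construction -/

noncomputable def searchFn (z y : Nat.Partrec.Code) (w : ℕ) (L n : ℕ) : Option ℕ :=
  (Code.evaln n.unpair.2 z (encode ((Cy y).curry
      (encode (ofNat (List ℕ) L ++ ofNat (List ℕ) n.unpair.1))))).bind fun u =>
    bif u == w then Option.none else some (encode (ofNat (List ℕ) L ++ ofNat (List ℕ) n.unpair.1))

noncomputable def Φ₁ (z y : Nat.Partrec.Code) (w : ℕ) : Nat.Partrec.Code → ℕ →. ℕ := fun c x =>
  bif (Code.evaln x z (encode c)).isSome then
    (Nat.rfind fun k => Part.some ((Code.evaln k z (encode c)).isSome)).bind fun s =>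
      bif (Code.evaln s z (encode c)).getD 0 == w then
        (G y s).bind fun L =>
          (Nat.rfindOpt (searchFn z y w L)).bind fun m =>
            Code.eval ((Cy y).curry m) x
      else y.eval x
  else y.eval x

lemma searchFn_prim (z y : Nat.Partrec.Code) (w : ℕ) : Primrec₂ (searchFn z y w) := by
  have hσe : Primrec fun p : ℕ × ℕ =>
      encode (ofNat (List ℕ) p.1 ++ ofNat (List ℕ) p.2.unpair.1) :=
    Primrec.encode.comp (Primrec.list_append.comp
      ((Primrec.ofNat (List ℕ)).comp Primrec.fst)
      ((Primrec.ofNat (List ℕ)).comp (Primrec.fst.comp (Primrec.unpair.comp Primrec.snd))))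
  have hev : Primrec fun p : ℕ × ℕ =>
      Code.evaln p.2.unpair.2 z (encode ((Cy y).curry
        (encode (ofNat (List ℕ) p.1 ++ ofNat (List ℕ) p.2.unpair.1)))) :=
    Code.primrec_evaln.comp
      (((Primrec.snd.comp (Primrec.unpair.comp Primrec.snd)).pair (Primrec.const z)).pair
        (Primrec.encode.comp (Code.primrec₂_curry.comp (Primrec.const (Cy y)) hσe)))
  have hinner : Primrec fun r : (ℕ × ℕ) × ℕ =>
      bif r.2 == w then Option.none else
        some (encode (ofNat (List ℕ) r.1.1 ++ ofNat (List ℕ) r.1.2.unpair.1)) :=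
    Primrec.cond (Primrec.beq.comp Primrec.snd (Primrec.const w))
      (Primrec.const Option.none)
      (Primrec.option_some.comp (hσe.comp Primrec.fst))
  exact (Primrec.option_bind hev hinner.to₂).to₂

lemma Φ₁_partrec (z y : Nat.Partrec.Code) (w : ℕ) : Partrec₂ (Φ₁ z y w) := by
  have hbcond : Computable fun p : Code × ℕ => (Code.evaln p.2 z (encode p.1)).isSome :=
    (Primrec.option_isSome.comp (Code.primrec_evaln.comp
      ((Primrec.snd.pair (Primrec.const z)).pair (Primrec.encode.comp Primrec.fst)))).to_comp
  have hElse : Partrec fun p : Code × ℕ => y.eval p.2 :=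
    Code.eval_part.comp (Computable.const y) Computable.snd
  have hrfind : Partrec fun p : Code × ℕ =>
      Nat.rfind fun k => Part.some ((Code.evaln k z (encode p.1)).isSome) := by
    apply Partrec.rfind
    exact (((Primrec.option_isSome.comp (Code.primrec_evaln.comp
      ((Primrec.snd.pair (Primrec.const z)).pair
        (Primrec.encode.comp (Primrec.fst.comp Primrec.fst))))).to_comp).to₂).partrec₂
  have hGpart : Partrec fun q : (Code × ℕ) × ℕ => G y q.2 := by
    apply Partrec.rfindOpt
    have : Primrec fun r : ((Code × ℕ) × ℕ) × ℕ => (listN y r.2 r.1.2).map encode :=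
      Primrec.option_map ((listN_prim y).comp Primrec.snd (Primrec.snd.comp Primrec.fst))
        (Primrec.encode.comp Primrec.snd).to₂
    exact this.to_comp.to₂
  have hS : Partrec fun r : ((Code × ℕ) × ℕ) × ℕ => Nat.rfindOpt (searchFn z y w r.2) := by
    apply Partrec.rfindOpt
    exact (((searchFn_prim z y w).comp (Primrec.snd.comp Primrec.fst)
      Primrec.snd).to_comp).to₂
  have hfinal : Partrec fun u : (((Code × ℕ) × ℕ) × ℕ) × ℕ =>
      Code.eval ((Cy y).curry u.2) u.1.1.1.2 :=
    Code.eval_part.comp ((Code.primrec₂_curry.comp (Primrec.const (Cy y)) Primrec.snd).to_comp)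
      (Computable.snd.comp (Computable.fst.comp (Computable.fst.comp Computable.fst)))
  have hbig : Partrec fun q : (Code × ℕ) × ℕ =>
      (G y q.2).bind fun L => (Nat.rfindOpt (searchFn z y w L)).bind fun m =>
        Code.eval ((Cy y).curry m) q.1.2 :=
    hGpart.bind ((hS.bind hfinal.to₂).to₂)
  have hcond2 : Computable fun q : (Code × ℕ) × ℕ =>
      (Code.evaln q.2 z (encode q.1.1)).getD 0 == w :=
    (Primrec.beq.comp (Primrec.option_getD.comp (Code.primrec_evaln.comp
      ((Primrec.snd.pair (Primrec.const z)).pair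
        (Primrec.encode.comp (Primrec.fst.comp Primrec.fst)))) (Primrec.const 0))
      (Primrec.const w)).to_comp
  have hy3 : Partrec fun q : (Code × ℕ) × ℕ => y.eval q.1.2 :=
    Code.eval_part.comp (Computable.const y) (Computable.snd.comp Computable.fst)
  have hrest : Partrec fun q : (Code × ℕ) × ℕ =>
      bif (Code.evaln q.2 z (encode q.1.1)).getD 0 == w then
        (G y q.2).bind fun L => (Nat.rfindOpt (searchFn z y w L)).bind fun m =>
          Code.eval ((Cy y).curry m) q.1.2
      else y.eval q.1.2 := Partrec.cond hcond2 hbig hy3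
  exact Partrec.cond hbcond (hrfind.bind hrest.to₂) hElse

lemma searchFn_sound {z y : Nat.Partrec.Code} {w L n m : ℕ}
    (h : searchFn z y w L n = some m) :
    (∃ ρ : List ℕ, ofNat (List ℕ) m = ofNat (List ℕ) L ++ ρ) ∧
      ∃ u, u ∈ Code.eval z (encode ((Cy y).curry m)) ∧ u ≠ w := by
  unfold searchFn at h
  simp only [Option.bind_eq_some_iff] at h
  obtain ⟨u, hu, hcond⟩ := h
  rcases hbu : u == w with _ | _
  · rw [hbu] at hcond
    simp only [Bool.cond_false, Option.some_inj] at hcond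
    subst hcond
    refine ⟨⟨ofNat (List ℕ) n.unpair.1, by simp⟩, u, ?_, by simpa using hbu⟩
    exact Code.evaln_sound (Option.mem_def.2 hu)
  · rw [hbu] at hcond; simp at hcond

lemma step1 (z y : Nat.Partrec.Code)
    (htot : ∀ c : Nat.Partrec.Code, TotalCode c → (z.eval (encode c)).Dom)
    (hext : ∀ c c' : Nat.Partrec.Code, TotalCode c → TotalCode c' →
      (∀ n, c.eval n = c'.eval n) → z.eval (encode c) = z.eval (encode c'))
    (hy : TotalCode y) :
    ∃ t, ∀ σ : List ℕ, t ≤ σ.length → (∀ i < t, σ.getD i 0 ∈ y.eval i) →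
      z.eval (encode ((Cy y).curry (encode σ))) = z.eval (encode y) := by
  classical
  by_contra hcont
  push_neg at hcont
  set w := (z.eval (encode y)).get (htot y hy) with hwdef
  have hwy : z.eval (encode y) = Part.some w := Part.eq_some_iff.2 (Part.get_mem _)
  obtain ⟨e, he⟩ := Code.fixed_point₂ (Φ₁_partrec z y w)
  -- Step A : z.eval (encode e) halts
  have hDom : (z.eval (encode e)).Dom := by
    by_contra hD
    have heval : ∀ x, Code.eval e x = y.eval x := by
      intro x
      rw [he]
      unfold Φ₁
      rw [evaln_none_of_not_dom hD x]
      rfl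
    exact hD (htot e fun n => (heval n) ▸ hy n)
  obtain ⟨v, hv⟩ := Part.dom_iff_mem.1 hDom
  -- the least stage s
  have hpdom : (Nat.rfind fun k => Part.some ((Code.evaln k z (encode e)).isSome)).Dom := by
    obtain ⟨k, hk⟩ := Code.evaln_complete.1 hv
    exact Nat.rfind_dom.2 ⟨k, by simpa using Option.isSome_iff_exists.2 ⟨v, hk⟩,
      fun _ => trivial⟩
  set s := (Nat.rfind fun k => Part.some ((Code.evaln k z (encode e)).isSome)).get hpdom
    with hsdef
  have hsmem : s ∈ Nat.rfind fun k => Part.some ((Code.evaln k z (encode e)).isSome) :=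
    Part.get_mem _
  have hrfind_eq :
      (Nat.rfind fun k => Part.some ((Code.evaln k z (encode e)).isSome)) = Part.some s :=
    Part.eq_some_iff.2 hsmem
  have hs_some : (Code.evaln s z (encode e)).isSome = true := by
    simpa using Nat.rfind_spec hsmem
  have hs_min : ∀ m < s, (Code.evaln m z (encode e)).isSome = false := fun m hm => by
    simpa using Nat.rfind_min hsmem hm
  have hsv : Code.evaln s z (encode e) = some v := by
    obtain ⟨u, hu⟩ := Option.isSome_iff_exists.1 hs_some
    rw [hu]
    congr 1
    exact Part.mem_unique (Code.evaln_sound (Option.mem_def.2 hu)) hv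
  have hx_some : ∀ x, s ≤ x → Code.evaln x z (encode e) = some v := fun x hx =>
    Code.evaln_mono hx hsv
  by_cases hvw : v = w
  · -- halted with the "right" value : use the search to diagonalize
    subst hvw
    obtain ⟨a, ha⟩ := Part.dom_iff_mem.1 (G_dom hy s)
    have hGeq : G y s = Part.some a := Part.eq_some_iff.2 ha
    obtain ⟨hLlen, hLval⟩ := G_sound ha
    set L := ofNat (List ℕ) a with hLdef
    -- the counterexample σ0 provided by ¬continuity on finite patches
    obtain ⟨σ0, hlen0, hagree0, hne0⟩ := hcont s
    have hsplit : σ0 = L ++ σ0.drop s := by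
      nth_rewrite 1 [← List.take_append_drop s σ0]
      congr 1
      apply List.ext_getElem
      · simp [hLlen, hlen0]
      · intro i h1 h2
        have hi : i < s := by simpa [hlen0] using h1
        rw [List.getElem_take]
        have e1 : σ0[i] = σ0.getD i 0 := (List.getD_eq_getElem σ0 0 (by omega)).symm
        have e2 : L[i] = L.getD i 0 := (List.getD_eq_getElem L 0 (by omega)).symm
        rw [e1, e2]
        exact Part.mem_unique (hagree0 i hi) (hLval i hi)
    -- the diagonalizing witness exists, so the search halts
    have hp0tot : TotalCode ((Cy y).curry (encode σ0)) := total_curry_Cy hy _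
    obtain ⟨u, hu⟩ := Part.dom_iff_mem.1 (htot _ hp0tot)
    have huw : u ≠ w := by
      intro h
      subst h
      exact hne0 (by rw [hwy]; exact Part.eq_some_iff.2 hu)
    obtain ⟨k0, hk0⟩ := Code.evaln_complete.1 hu
    have hhit : searchFn z y w a (Nat.pair (encode (σ0.drop s)) k0) = some (encode σ0) := by
      unfold searchFn
      rw [Nat.unpair_pair]
      simp only [Denumerable.ofNat_encode, ← hLdef, ← hsplit]
      rw [Option.mem_def.1 hk0]
      rw [Option.bind_some]
      rw [show (u == w) = false from beq_eq_false_iff_ne.2 huw]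
      rfl
    have hSdom : (Nat.rfindOpt (searchFn z y w a)).Dom :=
      Nat.rfindOpt_dom.2 ⟨_, _, hhit⟩
    obtain ⟨m, hm⟩ := Part.dom_iff_mem.1 hSdom
    have hSeq : Nat.rfindOpt (searchFn z y w a) = Part.some m := Part.eq_some_iff.2 hm
    obtain ⟨n', hn'⟩ := Nat.rfindOpt_spec hm
    obtain ⟨⟨ρ, hρ⟩, u', hu', hu'w⟩ := searchFn_sound (Option.mem_def.1 hn')
    -- e computes the patch code m
    have hkey : ∀ x, Code.eval e x = Code.eval ((Cy y).curry m) x := by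
      intro x
      rcases lt_or_ge x s with hx | hx
      · have hxlen : x < (ofNat (List ℕ) m).length := by
          rw [hρ]
          simp only [List.length_append, ← hLdef, hLlen]
          omega
        have hgd : (ofNat (List ℕ) m).getD x 0 = L.getD x 0 := by
          rw [hρ, ← hLdef, List.getD_append _ _ _ _ (by omega)]
        have hyx : y.eval x = Part.some (L.getD x 0) :=
          Part.eq_some_iff.2 (hLval x hx)
        rw [he]
        unfold Φ₁
        rw [hs_min x hx]
        rw [eval_curry_Cy, if_pos hxlen, hgd]
        simpa using hyx
      · rw [he]
        unfold Φ₁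
        rw [hx_some x hx]
        simp only [Option.isSome_some, Bool.cond_true, hrfind_eq, Part.bind_some, hsv,
          Option.getD_some, beq_self_eq_true, hGeq, hSeq]
    -- conclude : contradiction between values w and u'
    have hptot : TotalCode ((Cy y).curry m) := total_curry_Cy hy m
    have hetot : TotalCode e := fun n => (hkey n) ▸ hptot n
    have heq := hext e _ hetot hptot hkey
    have hw' : w ∈ z.eval (encode ((Cy y).curry m)) := heq ▸ hv
    exact hu'w (Part.mem_unique hu' hw')
  · -- halted with a "wrong" value : e computes y itself
    have hkey : ∀ x, Code.eval e x = y.eval x := by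
      intro x
      rw [he]
      unfold Φ₁
      rcases hb : (Code.evaln x z (encode e)).isSome with _ | _
      · rfl
      · have hx : s ≤ x := by
          by_contra hxs
          rw [hs_min x (by omega)] at hb
          exact absurd hb (by simp)
        simp only [Bool.cond_true, hrfind_eq, Part.bind_some, hsv, Option.getD_some,
          show (v == w) = false from beq_eq_false_iff_ne.2 hvw, Bool.cond_false]
    have hetot : TotalCode e := fun n => (hkey n) ▸ hy n
    have heq := hext e y hetot hy hkey
    rw [hwy] at heq
    exact hvw (Part.mem_unique hv (heq ▸ Part.mem_some w))

end KLSTAux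

namespace KLSTAux
open Code Encodable Denumerable

/-! ### Second construction -/

noncomputable def Φ₂ (z y y' : Nat.Partrec.Code) (w t : ℕ) :
    Nat.Partrec.Code → ℕ →. ℕ := fun c x =>
  bif (Code.evaln x z (encode c)).isSome then
    (Nat.rfind fun k => Part.some ((Code.evaln k z (encode c)).isSome)).bind fun s =>
      bif (Code.evaln s z (encode c)).getD 0 == w then y'.eval x
      else (G y' (max s t)).bind fun L => Code.eval ((Cy y).curry L) x
  else y'.eval x

lemma Φ₂_partrec (z y y' : Nat.Partrec.Code) (w t : ℕ) : Partrec₂ (Φ₂ z y y' w t) := by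
  have hbcond : Computable fun p : Code × ℕ => (Code.evaln p.2 z (encode p.1)).isSome :=
    (Primrec.option_isSome.comp (Code.primrec_evaln.comp
      ((Primrec.snd.pair (Primrec.const z)).pair (Primrec.encode.comp Primrec.fst)))).to_comp
  have hElse : Partrec fun p : Code × ℕ => y'.eval p.2 :=
    Code.eval_part.comp (Computable.const y') Computable.snd
  have hrfind : Partrec fun p : Code × ℕ =>
      Nat.rfind fun k => Part.some ((Code.evaln k z (encode p.1)).isSome) := by
    apply Partrec.rfind
    exact (((Primrec.option_isSome.comp (Code.primrec_evaln.comp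
      ((Primrec.snd.pair (Primrec.const z)).pair
        (Primrec.encode.comp (Primrec.fst.comp Primrec.fst))))).to_comp).to₂).partrec₂
  have hGpart : Partrec fun q : (Code × ℕ) × ℕ => G y' (max q.2 t) := by
    apply Partrec.rfindOpt
    have : Primrec fun r : ((Code × ℕ) × ℕ) × ℕ =>
        (listN y' r.2 (max r.1.2 t)).map encode :=
      Primrec.option_map ((listN_prim y').comp Primrec.snd
          (Primrec.nat_max.comp (Primrec.snd.comp Primrec.fst) (Primrec.const t)))
        (Primrec.encode.comp Primrec.snd).to₂
    exact this.to_comp.to₂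
  have hfinal : Partrec fun r : ((Code × ℕ) × ℕ) × ℕ =>
      Code.eval ((Cy y).curry r.2) r.1.1.2 :=
    Code.eval_part.comp ((Code.primrec₂_curry.comp (Primrec.const (Cy y)) Primrec.snd).to_comp)
      (Computable.snd.comp (Computable.fst.comp Computable.fst))
  have hbig : Partrec fun q : (Code × ℕ) × ℕ =>
      (G y' (max q.2 t)).bind fun L => Code.eval ((Cy y).curry L) q.1.2 :=
    hGpart.bind hfinal.to₂
  have hcond2 : Computable fun q : (Code × ℕ) × ℕ =>
      (Code.evaln q.2 z (encode q.1.1)).getD 0 == w :=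
    (Primrec.beq.comp (Primrec.option_getD.comp (Code.primrec_evaln.comp
      ((Primrec.snd.pair (Primrec.const z)).pair
        (Primrec.encode.comp (Primrec.fst.comp Primrec.fst)))) (Primrec.const 0))
      (Primrec.const w)).to_comp
  have hy'3 : Partrec fun q : (Code × ℕ) × ℕ => y'.eval q.1.2 :=
    Code.eval_part.comp (Computable.const y') (Computable.snd.comp Computable.fst)
  have hrest : Partrec fun q : (Code × ℕ) × ℕ =>
      bif (Code.evaln q.2 z (encode q.1.1)).getD 0 == w then y'.eval q.1.2
      else (G y' (max q.2 t)).bind fun L => Code.eval ((Cy y).curry L) q.1.2 :=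
    Partrec.cond hcond2 hy'3 hbig
  exact Partrec.cond hbcond (hrfind.bind hrest.to₂) hElse

lemma step2 (z y : Nat.Partrec.Code)
    (htot : ∀ c : Nat.Partrec.Code, TotalCode c → (z.eval (encode c)).Dom)
    (hext : ∀ c c' : Nat.Partrec.Code, TotalCode c → TotalCode c' →
      (∀ n, c.eval n = c'.eval n) → z.eval (encode c) = z.eval (encode c'))
    (hy : TotalCode y) (t : ℕ)
    (ht : ∀ σ : List ℕ, t ≤ σ.length → (∀ i < t, σ.getD i 0 ∈ y.eval i) →
      z.eval (encode ((Cy y).curry (encode σ))) = z.eval (encode y))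
    (y' : Nat.Partrec.Code) (hy' : TotalCode y')
    (hagr : ∀ n < t, y.eval n = y'.eval n) :
    z.eval (encode y') = z.eval (encode y) := by
  classical
  by_contra hne
  set w := (z.eval (encode y)).get (htot y hy) with hwdef
  have hwy : z.eval (encode y) = Part.some w := Part.eq_some_iff.2 (Part.get_mem _)
  set w' := (z.eval (encode y')).get (htot y' hy') with hw'def
  have hwy' : z.eval (encode y') = Part.some w' := Part.eq_some_iff.2 (Part.get_mem _)
  have hww' : w' ≠ w := fun h => hne (by rw [hwy, hwy', h])
  obtain ⟨e, he⟩ := Code.fixed_point₂ (Φ₂_partrec z y y' w t)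
  have hDom : (z.eval (encode e)).Dom := by
    by_contra hD
    have heval : ∀ x, Code.eval e x = y'.eval x := by
      intro x
      rw [he]
      unfold Φ₂
      rw [evaln_none_of_not_dom hD x]
      rfl
    exact hD (htot e fun n => (heval n) ▸ hy' n)
  obtain ⟨v, hv⟩ := Part.dom_iff_mem.1 hDom
  have hpdom : (Nat.rfind fun k => Part.some ((Code.evaln k z (encode e)).isSome)).Dom := by
    obtain ⟨k, hk⟩ := Code.evaln_complete.1 hv
    exact Nat.rfind_dom.2 ⟨k, by simpa using Option.isSome_iff_exists.2 ⟨v, hk⟩,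
      fun _ => trivial⟩
  set s := (Nat.rfind fun k => Part.some ((Code.evaln k z (encode e)).isSome)).get hpdom
    with hsdef
  have hsmem : s ∈ Nat.rfind fun k => Part.some ((Code.evaln k z (encode e)).isSome) :=
    Part.get_mem _
  have hrfind_eq :
      (Nat.rfind fun k => Part.some ((Code.evaln k z (encode e)).isSome)) = Part.some s :=
    Part.eq_some_iff.2 hsmem
  have hs_min : ∀ m < s, (Code.evaln m z (encode e)).isSome = false := fun m hm => by
    simpa using Nat.rfind_min hsmem hm
  have hsv : Code.evaln s z (encode e) = some v := by
    obtain ⟨u, hu⟩ := Option.isSome_iff_exists.1 (by simpa using Nat.rfind_spec hsmem)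
    rw [hu]
    congr 1
    exact Part.mem_unique (Code.evaln_sound (Option.mem_def.2 hu)) hv
  have hx_some : ∀ x, s ≤ x → Code.evaln x z (encode e) = some v := fun x hx =>
    Code.evaln_mono hx hsv
  by_cases hvw : v = w
  · -- the functional claims value w on e, but e = y'
    subst hvw
    have hkey : ∀ x, Code.eval e x = y'.eval x := by
      intro x
      rw [he]
      unfold Φ₂
      rcases hb : (Code.evaln x z (encode e)).isSome with _ | _
      · rfl
      · have hx : s ≤ x := by
          by_contra hxs
          rw [hs_min x (by omega)] at hb
          exact absurd hb (by simp)
        simp only [Bool.cond_true, hrfind_eq, Part.bind_some, hsv, Option.getD_some,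
          beq_self_eq_true, Bool.cond_true]
    have hetot : TotalCode e := fun n => (hkey n) ▸ hy' n
    have heq := hext e y' hetot hy' hkey
    rw [hwy'] at heq
    exact hww' (Part.mem_unique (heq ▸ hv) (Part.mem_some w')).symm
  · -- the functional claims a value ≠ w on e, but e is a patch of y
    have hGdom := G_dom hy' (max s t)
    obtain ⟨a, ha⟩ := Part.dom_iff_mem.1 hGdom
    have hGeq : G y' (max s t) = Part.some a := Part.eq_some_iff.2 ha
    obtain ⟨hLlen, hLval⟩ := G_sound ha
    set L := ofNat (List ℕ) a with hLdef
    have hkey : ∀ x, Code.eval e x = Code.eval ((Cy y).curry a) x := by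
      intro x
      rcases lt_or_ge x s with hx | hx
      · have hxm : x < max s t := lt_of_lt_of_le hx (le_max_left s t)
        rw [he]
        unfold Φ₂
        rw [hs_min x hx]
        rw [eval_curry_Cy, if_pos (by rw [← hLdef, hLlen]; exact hxm)]
        simpa using Part.eq_some_iff.2 (hLval x hxm)
      · rw [he]
        unfold Φ₂
        rw [hx_some x hx]
        simp only [Option.isSome_some, Bool.cond_true, hrfind_eq, Part.bind_some, hsv,
          Option.getD_some, show (v == w) = false from beq_eq_false_iff_ne.2 hvw,
          Bool.cond_false, hGeq]
    have hptot : TotalCode ((Cy y).curry a) := total_curry_Cy hy a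
    have hetot : TotalCode e := fun n => (hkey n) ▸ hptot n
    have heq := hext e _ hetot hptot hkey
    have hL : z.eval (encode ((Cy y).curry a)) = z.eval (encode y) := by
      have := ht L (by rw [hLlen]; exact le_max_right s t)
        (fun i hi => by
          rw [hagr i hi]
          exact hLval i (lt_of_lt_of_le hi (le_max_right s t)))
      rwa [hLdef, Denumerable.encode_ofNat] at this
    rw [heq, hL, hwy] at hv
    exact hvw (Part.mem_unique hv (Part.mem_some w)) |>.elim

end KLSTAux

/-- KLST (Kreisel–Lacombe–Shoenfield/Tseitin), continuity part: a computable
functional defined and extensional on indices of total computable functions is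
continuous at every such index. -/
theorem klst (z : Nat.Partrec.Code)
    (htot : ∀ y : Nat.Partrec.Code, TotalCode y →
      (z.eval (Encodable.encode y)).Dom)
    (hext : ∀ y y' : Nat.Partrec.Code, TotalCode y → TotalCode y' →
      (∀ n, y.eval n = y'.eval n) →
      z.eval (Encodable.encode y) = z.eval (Encodable.encode y')) :
    ∀ y : Nat.Partrec.Code, TotalCode y → ∃ m, ∀ y' : Nat.Partrec.Code,
      TotalCode y' → (∀ n < m, y.eval n = y'.eval n) →
      z.eval (Encodable.encode y') = z.eval (Encodable.encode y) := by
  intro y hy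
  obtain ⟨t, ht⟩ := KLSTAux.step1 z y htot hext hy
  exact ⟨t, fun y' hy' hagr => KLSTAux.step2 z y htot hext hy t ht y' hy' hagr⟩
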